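/- For every integer t ≥ 6, the complement of the wheel graph W_{2t−3} on 2t−3 vertices contains the complete graph K_t as a minor. -/

import Mathlib

open SimpleGraph

/-- `H` is a minor of `G` (branch-set / minor-model definition): each vertex of `H`
is represented by a connected branch set in `G`, branch sets are pairwise disjoint,
and edges of `H` are realized by edges between the corresponding branch sets. -/
def IsMinorOf {α β : Type*} (H : SimpleGraph α) (G : SimpleGraph β) : Prop :=
  ∃ f : α → Set β,
    (∀ a, (G.induce (f a)).Connected) ∧
    (∀ a b, a ≠ b → Disjoint (f a) (f b)) ∧
    (∀ a b, H.Adj a b → ∃ u ∈ f a, ∃ v ∈ f b, G.Adj u v)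

/-- The wheel graph `W n` on `n` vertices: hub `none` joined to the cycle
`C (n-1)` on the rim vertices `some i`, `i : ZMod (n-1)`. -/
def wheelGraph (n : ℕ) : SimpleGraph (Option (ZMod (n - 1))) where
  Adj x y := x ≠ y ∧
    (x = none ∨ y = none ∨
      ∃ i j : ZMod (n - 1), x = some i ∧ y = some j ∧ (i - j = 1 ∨ j - i = 1))
  symm := ⟨by
    rintro x y ⟨hne, h⟩
    refine ⟨hne.symm, ?_⟩
    rcases h with h | h | ⟨i, j, hx, hy, hij⟩
    · exact Or.inr (Or.inl h)
    · exact Or.inl h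
    · exact Or.inr (Or.inr ⟨j, i, hy, hx, hij.symm⟩)⟩
  loopless := ⟨fun x h => h.1 rfl⟩

def Av (t k : ℕ) : ℕ :=
  if k = 0 then 0 else if k = 1 then 2 else if k = 2 then t - 2
  else if k = 3 then t else if k = 4 then 1 else k - 2

def Bv (t k : ℕ) : ℕ :=
  if k < 4 then Av t k else if k = 4 then t - 1 else k + t - 4

lemma AvBv_bounds (t k : ℕ) (ht : 6 ≤ t) (hk : k < t) :
    Av t k < 2 * t - 4 ∧ Bv t k < 2 * t - 4 := by
  unfold Bv Av; split_ifs <;> omega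

set_option maxHeartbeats 2000000 in
lemma AvBv_distinct (t k l : ℕ) (ht : 6 ≤ t) (hk : k < t) (hl : l < t) (hne : k ≠ l) :
    Av t k ≠ Av t l ∧ Av t k ≠ Bv t l ∧ Bv t k ≠ Av t l ∧ Bv t k ≠ Bv t l := by
  unfold Bv Av; split_ifs <;> omega

set_option maxHeartbeats 2000000 in
lemma AvBv_witness (t k l : ℕ) (ht : 6 ≤ t) (hk : k < t) (hl : l < t) (hne : k ≠ l) :
    ∃ x y : ℕ, (x = Av t k ∨ x = Bv t k) ∧ (y = Av t l ∨ y = Bv t l) ∧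
      (x + 2 ≤ y ∨ y + 2 ≤ x) ∧ ¬(x = 0 ∧ y = 2 * t - 5) ∧ ¬(y = 0 ∧ x = 2 * t - 5) := by
  by_cases hc : Av t k ≤ Av t l + 1 ∧ Av t l ≤ Av t k + 1
  · rcases Nat.lt_or_ge k l with hkl | hkl
    · refine ⟨Av t k, Bv t l, Or.inl rfl, Or.inr rfl, ?_⟩
      unfold Av at hc; unfold Bv Av; split_ifs at hc ⊢ <;> first | omega | (simp; omega)
    · refine ⟨Bv t k, Av t l, Or.inr rfl, Or.inl rfl, ?_⟩
      unfold Av at hc; unfold Bv Av; split_ifs at hc ⊢ <;> first | omega | (simp; omega)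
  · refine ⟨Av t k, Av t l, Or.inl rfl, Or.inl rfl, ?_⟩
    unfold Av at hc ⊢; split_ifs at hc ⊢ <;> first | omega | (simp; omega)

lemma pair_connected {V : Type*} (G : SimpleGraph V) (u v : V) (h : u = v ∨ G.Adj u v) :
    (G.induce {u, v}).Connected := by
  rw [SimpleGraph.connected_iff]
  refine ⟨?_, ⟨⟨u, by simp⟩⟩⟩
  rintro ⟨a, ha⟩ ⟨b, hb⟩
  simp only [Set.mem_insert_iff, Set.mem_singleton_iff] at ha hb
  rcases h with rfl | hadj
  · have : a = b := by rcases ha with rfl | rfl <;> rcases hb with rfl | rfl <;> rfl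
    subst this
    rfl
  · rcases ha with rfl | rfl <;> rcases hb with rfl | rfl
    · rfl
    · exact SimpleGraph.Adj.reachable (by exact hadj)
    · exact SimpleGraph.Adj.reachable (by exact hadj.symm)
    · rfl

lemma cast_inj_of_lt (t x y : ℕ) (ht : 6 ≤ t) (hx : x < 2 * t - 4) (hy : y < 2 * t - 4)
    (h : ((x : ℕ) : ZMod (2 * t - 3 - 1)) = ((y : ℕ) : ZMod (2 * t - 3 - 1))) : x = y := by
  haveI : NeZero (2 * t - 3 - 1) := ⟨by omega⟩
  have hv := congrArg ZMod.val h
  rwa [ZMod.val_natCast_of_lt (by omega), ZMod.val_natCast_of_lt (by omega)] at hv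

lemma good (t : ℕ) (ht : 6 ≤ t) (x y : ℕ) (hx : x < 2 * t - 4) (hy : y < 2 * t - 4)
    (hgap : x + 2 ≤ y ∨ y + 2 ≤ x) (h0 : ¬(x = 0 ∧ y = 2 * t - 5))
    (h1 : ¬(y = 0 ∧ x = 2 * t - 5)) :
    (wheelGraph (2 * t - 3))ᶜ.Adj (some ((x : ℕ) : ZMod (2 * t - 3 - 1)))
      (some ((y : ℕ) : ZMod (2 * t - 3 - 1))) := by
  haveI : NeZero (2 * t - 3 - 1) := ⟨by omega⟩
  have key : ∀ a b : ℕ, a < 2 * t - 4 → b < 2 * t - 4 →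
      ((a : ZMod (2 * t - 3 - 1)) - (b : ZMod (2 * t - 3 - 1)) = 1) →
      (a = b + 1 ∨ (a = 0 ∧ b = 2 * t - 5)) := by
    intro a b ha hb h
    have h' : ((a : ℕ) : ZMod (2 * t - 3 - 1)) = ((b + 1 : ℕ) : ZMod (2 * t - 3 - 1)) := by
      push_cast
      linear_combination h
    have hv := congrArg ZMod.val h'
    rw [ZMod.val_natCast_of_lt (by omega : a < 2 * t - 3 - 1)] at hv
    by_cases hb1 : b + 1 < 2 * t - 3 - 1
    · left
      rw [ZMod.val_natCast_of_lt hb1] at hv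
      omega
    · right
      have hbm : b + 1 = 2 * t - 3 - 1 := by omega
      rw [hbm, ZMod.natCast_self] at hv
      simp only [ZMod.val_zero] at hv
      omega
  rw [SimpleGraph.compl_adj]
  constructor
  · intro h
    exact absurd (cast_inj_of_lt t x y ht hx hy (Option.some.inj h)) (by omega)
  · rintro ⟨hne, h | h | ⟨i, j, hi, hj, hij⟩⟩
    · simp at h
    · simp at h
    · obtain rfl : i = ((x : ℕ) : ZMod (2 * t - 3 - 1)) := (Option.some.inj hi).symm
      obtain rfl : j = ((y : ℕ) : ZMod (2 * t - 3 - 1)) := (Option.some.inj hj).symm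
      rcases hij with h | h
      · rcases key x y hx hy h with h' | h'
        · omega
        · exact h0 h'
      · rcases key y x hy hx h with h' | h'
        · omega
        · exact h1 h'

/-- For `t ≥ 6`, the complement of the wheel graph `W (2t-3)` contains a `K t` minor. -/
theorem wheel_compl_Kt (t : ℕ) (ht : 6 ≤ t) :
    IsMinorOf (⊤ : SimpleGraph (Fin t)) (wheelGraph (2 * t - 3))ᶜ := by
  refine ⟨fun v => {some ((Av t v.val : ℕ) : ZMod (2 * t - 3 - 1)),
                    some ((Bv t v.val : ℕ) : ZMod (2 * t - 3 - 1))}, ?_, ?_, ?_⟩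
  · intro a
    apply pair_connected
    rcases Nat.lt_or_ge a.val 4 with h4 | h4
    · left
      have hb : Bv t a.val = Av t a.val := by unfold Bv; rw [if_pos h4]
      rw [hb]
    · right
      have hba := AvBv_bounds t a.val ht a.isLt
      refine good t ht _ _ hba.1 hba.2 ?_ ?_ ?_ <;>
        · have hlt := a.isLt
          unfold Bv Av
          split_ifs <;> omega
  · intro a b hab
    have hne : a.val ≠ b.val := fun h => hab (Fin.ext h)
    have hd := AvBv_distinct t a.val b.val ht a.isLt b.isLt hne
    have hba := AvBv_bounds t a.val ht a.isLt
    have hbb := AvBv_bounds t b.val ht b.isLt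
    rw [Set.disjoint_left]
    rintro x (rfl | rfl) hx <;>
      simp only [Set.mem_insert_iff, Set.mem_singleton_iff] at hx <;>
      rcases hx with h | h <;>
      · have := cast_inj_of_lt t _ _ ht (by tauto) (by tauto) (Option.some.inj h)
        tauto
  · intro a b hab
    have hne : a.val ≠ b.val := fun h => ((SimpleGraph.top_adj _ _).mp hab) (Fin.ext h)
    obtain ⟨x, y, hxm, hym, hgap, h0, h1⟩ :=
      AvBv_witness t a.val b.val ht a.isLt b.isLt hne
    have hxb : x < 2 * t - 4 := by
      rcases hxm with rfl | rfl
      · exact (AvBv_bounds t a.val ht a.isLt).1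
      · exact (AvBv_bounds t a.val ht a.isLt).2
    have hyb : y < 2 * t - 4 := by
      rcases hym with rfl | rfl
      · exact (AvBv_bounds t b.val ht b.isLt).1
      · exact (AvBv_bounds t b.val ht b.isLt).2
    refine ⟨some ((x : ℕ) : ZMod (2 * t - 3 - 1)), ?_,
            some ((y : ℕ) : ZMod (2 * t - 3 - 1)), ?_,
            good t ht x y hxb hyb hgap h0 h1⟩
    · rcases hxm with rfl | rfl
      · exact Set.mem_insert _ _
      · exact Set.mem_insert_of_mem _ rfl
    · rcases hym with rfl | rfl
      · exact Set.mem_insert _ _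
      · exact Set.mem_insert_of_mem _ rfl
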